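/- Let f : R -> R be convex with \int e^f d\gamma_1 = 1. Then for all t \ge 1, \gamma_1(\{x : f(x) \ge t\}) \le \sqrt{2/\pi} \cdot e^{-t}/\sqrt{t}. -/

import Mathlib

open MeasureTheory Real Set

noncomputable def stdGaussian (n : ℕ) : Measure (EuclideanSpace ℝ (Fin n)) :=
  volume.withDensity (fun x => ENNReal.ofReal ((2 * π) ^ (-(n : ℝ) / 2) * Real.exp (-‖x‖ ^ 2 / 2)))

noncomputable def Phibar (s : ℝ) : ℝ :=
  (Real.sqrt (2 * π))⁻¹ * ∫ x in Set.Ioi s, Real.exp (-x ^ 2 / 2)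

open ProbabilityTheory
open scoped NNReal ENNReal

section Aux

lemma sub_grad (f : ℝ → ℝ) (hconv : ConvexOn ℝ Set.univ f) (x0 : ℝ) :
    ∃ c : ℝ, ∀ y, f x0 + c * (y - x0) ≤ f y := by
  set S : Set ℝ := (fun u => (f x0 - f u) / (x0 - u)) '' Set.Iio x0 with hS
  have hne : S.Nonempty := ⟨_, ⟨x0 - 1, by simp, rfl⟩⟩
  have hub : ∀ z, x0 < z → (f z - f x0) / (z - x0) ∈ upperBounds S := by
    rintro z hz _ ⟨u, hu, rfl⟩
    exact hconv.slope_mono_adjacent (Set.mem_univ u) (Set.mem_univ z) hu hz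
  have hbdd : BddAbove S := ⟨_, hub (x0 + 1) (by linarith)⟩
  refine ⟨sSup S, fun y => ?_⟩
  rcases lt_trichotomy y x0 with h | h | h
  · have h1 : (f x0 - f y) / (x0 - y) ≤ sSup S := le_csSup hbdd ⟨y, h, rfl⟩
    rw [div_le_iff₀ (by linarith)] at h1
    nlinarith [h1]
  · simp [h]
  · have h1 : sSup S ≤ (f y - f x0) / (y - x0) := csSup_le hne (hub y h)
    rw [le_div_iff₀ (by linarith)] at h1
    nlinarith [h1]

lemma gauss_pdf_one (x : ℝ) : gaussianPDFReal 0 1 x = (Real.sqrt (2*π))⁻¹ * rexp (-x^2/2) := by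
  simp [gaussianPDFReal]

lemma gauss_integral_pdf_mul (c a : ℝ) :
    (∀ x, gaussianPDFReal 0 1 x * rexp (c*x + a)
      = ((Real.sqrt (2*π))⁻¹ * rexp (a + c^2/2)) * rexp (-(1/2) * ((x - c)^2))) := by
  intro x
  rw [gauss_pdf_one, mul_assoc, mul_assoc, ← Real.exp_add, ← Real.exp_add]
  ring_nf

lemma integrable_exp_line_pdf (c a : ℝ) :
    Integrable (fun x => gaussianPDFReal 0 1 x * rexp (c*x + a)) := by
  have : (fun x => gaussianPDFReal 0 1 x * rexp (c*x + a))
      = fun x => ((Real.sqrt (2*π))⁻¹ * rexp (a + c^2/2)) * rexp (-(1/2) * ((x - c)^2)) := by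
    ext x; exact gauss_integral_pdf_mul c a x
  rw [this]
  exact (((integrable_exp_neg_mul_sq (by norm_num : (0:ℝ) < 1/2)).comp_sub_right c)).const_mul _

lemma integral_gauss_density (g : ℝ → ℝ) :
    ∫ x, g x ∂(gaussianReal 0 1) = ∫ x, gaussianPDFReal 0 1 x * g x := by
  rw [gaussianReal_of_var_ne_zero 0 one_ne_zero]
  have h1 : gaussianPDF 0 1 = fun x => ((Real.toNNReal (gaussianPDFReal 0 1 x) : ℝ≥0) : ℝ≥0∞) := by
    ext x; rw [gaussianPDF, ENNReal.ofReal]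
  rw [h1, integral_withDensity_eq_integral_smul
    ((measurable_gaussianPDFReal 0 1).real_toNNReal)]
  congr 1
  ext x
  rw [NNReal.smul_def, smul_eq_mul, Real.coe_toNNReal _ (gaussianPDFReal_nonneg 0 1 x)]

lemma integral_exp_line (c a : ℝ) :
    ∫ x, rexp (c*x + a) ∂(gaussianReal 0 1) = rexp (a + c^2/2) := by
  rw [integral_gauss_density]
  have : ∫ x, gaussianPDFReal 0 1 x * rexp (c*x + a)
      = ∫ x, ((Real.sqrt (2*π))⁻¹ * rexp (a + c^2/2)) * rexp (-(1/2) * ((x - c)^2)) := by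
    congr 1; ext x; exact gauss_integral_pdf_mul c a x
  rw [this, integral_const_mul, integral_sub_right_eq_self (fun x => rexp (-(1/2) * x^2)) c,
    integral_gaussian]
  rw [show π / (1/2) = 2*π by ring]
  field_simp

lemma integrable_exp_line_gauss (c a : ℝ) :
    Integrable (fun x => rexp (c*x + a)) (gaussianReal 0 1) := by
  rw [gaussianReal_of_var_ne_zero 0 one_ne_zero,
    integrable_withDensity_iff (measurable_gaussianPDF 0 1)
      (Filter.Eventually.of_forall fun x => ENNReal.ofReal_lt_top)]
  have : (fun x => rexp (c*x+a) * (gaussianPDF 0 1 x).toReal)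
      = fun x => gaussianPDFReal 0 1 x * rexp (c*x+a) := by
    ext x; rw [gaussianPDF, ENNReal.toReal_ofReal (gaussianPDFReal_nonneg 0 1 x)]; ring
  rw [this]
  exact integrable_exp_line_pdf c a

lemma key_antider (s : ℝ) : ∫ x in Set.Ioi s, x * rexp (-x^2/2) = rexp (-s^2/2) := by
  have hint : Integrable (fun x : ℝ => x * rexp (-x^2/2)) := by
    have : (fun x : ℝ => x * rexp (-x^2/2)) = fun x => x * rexp (-(1/2) * x^2) := by
      ext x; ring_nf
    rw [this]; exact integrable_mul_exp_neg_mul_sq (by norm_num)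
  have h := integral_Ioi_of_hasDerivAt_of_tendsto
    (f := fun x : ℝ => -rexp (-x^2/2)) (f' := fun x : ℝ => x * rexp (-x^2/2)) (a := s) (m := 0)
    ?_ ?_ hint.integrableOn ?_
  · rw [h]; ring
  · exact ((Real.continuous_exp.comp (by continuity)).neg :
      Continuous fun x : ℝ => -rexp (-x^2/2)).continuousWithinAt
  · intro x _
    have : HasDerivAt (fun x : ℝ => -rexp (-x^2/2)) (-(rexp (-x^2/2) * ((-(2*x))/2))) x := by
      have h1 : HasDerivAt (fun x : ℝ => -x^2/2) ((-(2*x))/2) x := by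
        have := ((hasDerivAt_pow 2 x).neg).div_const 2
        simpa using this
      exact (h1.exp).neg
    refine this.congr_deriv ?_; ring
  · have : Filter.Tendsto (fun x : ℝ => -x^2/2) Filter.atTop Filter.atBot := by
      have h1 : Filter.Tendsto (fun x : ℝ => x^2) Filter.atTop Filter.atTop :=
        Filter.tendsto_pow_atTop two_ne_zero
      have h2 : Filter.Tendsto (fun x : ℝ => -x^2) Filter.atTop Filter.atBot :=
        Filter.tendsto_neg_atTop_atBot.comp h1
      exact h2.atBot_div_const (by norm_num)
    have := (Real.tendsto_exp_atBot.comp this).neg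
    simpa using this

lemma gauss_tail (s : ℝ) (hs : 0 < s) :
    gaussianReal 0 1 (Set.Ici s)
      ≤ ENNReal.ofReal ((Real.sqrt (2*π))⁻¹ * (rexp (-s^2/2) / s)) := by
  rw [gaussianReal_apply_eq_integral 0 one_ne_zero]
  apply ENNReal.ofReal_le_ofReal
  calc ∫ x in Set.Ici s, gaussianPDFReal 0 1 x
      = (Real.sqrt (2*π))⁻¹ * ∫ x in Set.Ici s, rexp (-x^2/2) := by
        rw [← integral_const_mul]; congr 1; ext x; rw [gauss_pdf_one]
    _ ≤ (Real.sqrt (2*π))⁻¹ * (rexp (-s^2/2) / s) := by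
        gcongr
        have hintexp : IntegrableOn (fun x : ℝ => rexp (-x^2/2)) (Set.Ici s) := by
          have : (fun x : ℝ => rexp (-x^2/2)) = fun x => rexp (-(1/2) * x^2) := by
            ext x; ring_nf
          rw [this]; exact (integrable_exp_neg_mul_sq (by norm_num)).integrableOn
        have hintmul : IntegrableOn (fun x : ℝ => x/s * rexp (-x^2/2)) (Set.Ici s) := by
          have : (fun x : ℝ => x/s * rexp (-x^2/2)) = fun x => (1/s) * (x * rexp (-x^2/2)) := by
            ext x; ring
          rw [this]
          refine Integrable.const_mul ?_ _
          have : (fun x : ℝ => x * rexp (-x^2/2)) = fun x => x * rexp (-(1/2) * x^2) := by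
            ext x; ring_nf
          rw [this]; exact (integrable_mul_exp_neg_mul_sq (by norm_num)).integrableOn
        calc ∫ x in Set.Ici s, rexp (-x^2/2)
            ≤ ∫ x in Set.Ici s, x/s * rexp (-x^2/2) := by
              refine setIntegral_mono_on hintexp hintmul measurableSet_Ici (fun x hx => ?_)
              have h1 : (1:ℝ) ≤ x/s := (one_le_div hs).mpr hx
              nlinarith [Real.exp_pos (-x^2/2)]
          _ = (1/s) * ∫ x in Set.Ioi s, x * rexp (-x^2/2) := by
              rw [← integral_Ici_eq_integral_Ioi, ← integral_const_mul]
              congr 1; ext x; ring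
          _ = rexp (-s^2/2) / s := by rw [key_antider]; ring

lemma gauss_symm (s : ℝ) :
    gaussianReal 0 1 (Set.Iic (-s)) = gaussianReal 0 1 (Set.Ici s) := by
  have h : (gaussianReal 0 1).map ((-1 : ℝ) * ·) = gaussianReal 0 1 := by
    rw [gaussianReal_map_const_mul]
    congr 1
    · norm_num
    · ext; norm_num
  conv_lhs => rw [← h]
  rw [Measure.map_apply (measurable_const_mul _) measurableSet_Iic]
  congr 1
  ext x
  simp only [Set.mem_preimage, Set.mem_Iic, Set.mem_Ici]
  constructor <;> intro hx <;> linarith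

end Aux

theorem deviation_dim1_convex (f : ℝ → ℝ)
    (hconv : ConvexOn ℝ Set.univ f)
    (hint : ∫ x, Real.exp (f x) ∂(ProbabilityTheory.gaussianReal 0 1) = 1) :
    ∀ t : ℝ, 1 ≤ t →
      ProbabilityTheory.gaussianReal 0 1 {x | t ≤ f x}
        ≤ ENNReal.ofReal (Real.sqrt (2 / π) * (Real.exp (-t) / Real.sqrt t)) := by
  intro t ht
  have ht0 : (0:ℝ) < t := by linarith
  have hInt : Integrable (fun x => rexp (f x)) (gaussianReal 0 1) := by
    by_contra h
    rw [integral_undef h] at hint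
    norm_num at hint
  set s : ℝ := Real.sqrt (2*t) with hs_def
  have hs : 0 < s := Real.sqrt_pos.mpr (by linarith)
  have hs2 : s^2 = 2*t := Real.sq_sqrt (by linarith)
  -- key inclusion
  have hsub : {x : ℝ | t ≤ f x} ⊆ Set.Iic (-s) ∪ Set.Ici s := by
    intro x0 hx0
    obtain ⟨c, hc⟩ := sub_grad f hconv x0
    have hle : rexp ((f x0 - c*x0) + c^2/2) ≤ 1 := by
      rw [← integral_exp_line c (f x0 - c*x0), ← hint]
      refine integral_mono (integrable_exp_line_gauss c _) hInt (fun y => ?_)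
      apply Real.exp_le_exp.mpr
      have := hc y
      linarith
    rw [Real.exp_le_one_iff] at hle
    have hx0' : t ≤ f x0 := hx0
    have hx2 : 2*t ≤ x0^2 := by nlinarith [sq_nonneg (x0 - c)]
    have habs : s ≤ |x0| := by
      rw [← Real.sqrt_sq_eq_abs]
      exact Real.sqrt_le_sqrt (by linarith)
    rcases le_abs.mp habs with h | h
    · exact Or.inr h
    · exact Or.inl (by simp only [Set.mem_Iic]; linarith)
  calc gaussianReal 0 1 {x | t ≤ f x}
      ≤ gaussianReal 0 1 (Set.Iic (-s) ∪ Set.Ici s) := measure_mono hsub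
    _ ≤ gaussianReal 0 1 (Set.Iic (-s)) + gaussianReal 0 1 (Set.Ici s) := measure_union_le _ _
    _ = gaussianReal 0 1 (Set.Ici s) + gaussianReal 0 1 (Set.Ici s) := by rw [gauss_symm]
    _ ≤ ENNReal.ofReal ((Real.sqrt (2*π))⁻¹ * (rexp (-s^2/2) / s))
        + ENNReal.ofReal ((Real.sqrt (2*π))⁻¹ * (rexp (-s^2/2) / s)) := by
          gcongr <;> exact gauss_tail s hs
    _ = ENNReal.ofReal (2 * ((Real.sqrt (2*π))⁻¹ * (rexp (-t) / s))) := by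
        rw [← ENNReal.ofReal_add (by positivity) (by positivity)]
        congr 1
        rw [hs2]
        ring_nf
    _ ≤ ENNReal.ofReal (Real.sqrt (2/π) * (rexp (-t) / Real.sqrt t)) := by
        apply ENNReal.ofReal_le_ofReal
        have e1 : Real.sqrt (2*π) = Real.sqrt 2 * Real.sqrt π := Real.sqrt_mul (by norm_num) _
        have e2 : s = Real.sqrt 2 * Real.sqrt t := by rw [hs_def, Real.sqrt_mul (by norm_num)]
        have e3 : Real.sqrt (2/π) = Real.sqrt 2 / Real.sqrt π :=
          Real.sqrt_div (by norm_num) π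
        have h2 : Real.sqrt 2 * Real.sqrt 2 = 2 := Real.mul_self_sqrt (by norm_num)
        have h12 : (1:ℝ) ≤ Real.sqrt 2 := by
          nlinarith [Real.sqrt_nonneg 2]
        have hπ : (0:ℝ) < Real.sqrt π := Real.sqrt_pos.mpr Real.pi_pos
        have htp : (0:ℝ) < Real.sqrt t := Real.sqrt_pos.mpr ht0
        have hE : (0:ℝ) < rexp (-t) := Real.exp_pos _
        rw [e1, e2, e3]
        have h2pos : (0:ℝ) < Real.sqrt 2 := by linarith
        field_simp
        rw [pow_succ, pow_two, h2]
        linarith
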